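/- Let λ ∈ (0, π/4) and define x₁(y) = (1/2)·arcsin( cos λ · sin² y / √(sin² y − sin² λ) ) for arcsin(tan λ) < y < π/2. Then x₁ is strictly decreasing on [arcsin(tan λ), arcsin(√2 · sin λ)] and strictly increasing on [arcsin(√2 · sin λ), π/2], with x₁(arcsin(tan λ)) = π/4, x₁(π/2) = π/4, and x₁(arcsin(√2 · sin λ)) = λ. -/

import Mathlib

open Real Set

private lemma F_sq (c s t : ℝ) (ht : s ^ 2 < t) :
    (c * t / Real.sqrt (t - s ^ 2)) ^ 2 = c ^ 2 * t ^ 2 / (t - s ^ 2) := by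
  rw [div_pow, Real.sq_sqrt (by linarith), mul_pow]

private lemma F_lt_F (c s u v : ℝ) (hc : 0 < c) (hu : s ^ 2 < u) (hv : s ^ 2 < v)
    (key : v ^ 2 * (u - s ^ 2) < u ^ 2 * (v - s ^ 2)) :
    c * v / Real.sqrt (v - s ^ 2) < c * u / Real.sqrt (u - s ^ 2) := by
  have hu0 : 0 < u := lt_of_le_of_lt (sq_nonneg s) hu
  have hv0 : 0 < v := lt_of_le_of_lt (sq_nonneg s) hv
  have hsu : 0 < Real.sqrt (u - s ^ 2) := Real.sqrt_pos.2 (by linarith)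
  have hsv : 0 < Real.sqrt (v - s ^ 2) := Real.sqrt_pos.2 (by linarith)
  have h2 : (c * v / Real.sqrt (v - s ^ 2)) ^ 2 < (c * u / Real.sqrt (u - s ^ 2)) ^ 2 := by
    rw [F_sq c s u hu, F_sq c s v hv, div_lt_div_iff₀ (by linarith) (by linarith)]
    nlinarith [mul_lt_mul_of_pos_left key (pow_pos hc 2)]
  exact lt_of_pow_lt_pow_left₀ 2 (by positivity) h2

private lemma F_le_one (c s t : ℝ) (hc : 0 < c) (hlo : s ^ 2 ≤ t * c ^ 2) (hhi : t ≤ 1)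
    (hsc : s ^ 2 + c ^ 2 = 1) (ht : s ^ 2 < t) :
    c * t / Real.sqrt (t - s ^ 2) ≤ 1 := by
  have ht0 : 0 < t := lt_of_le_of_lt (sq_nonneg s) ht
  rw [div_le_one (Real.sqrt_pos.2 (by linarith))]
  refine (Real.le_sqrt (by positivity) (by linarith)).2 ?_
  nlinarith [mul_nonneg (sub_nonneg.2 hhi) (sub_nonneg.2 hlo)]


private lemma key_anti (s u v : ℝ) (hs : 0 < s) (hu : s ^ 2 < u) (huv : u < v)
    (hvle : v ≤ 2 * s ^ 2) :
    v ^ 2 * (u - s ^ 2) < u ^ 2 * (v - s ^ 2) := by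
  have k1 : u * (v - s ^ 2) < v * s ^ 2 := by nlinarith
  nlinarith [mul_pos (sub_pos.2 huv) (show 0 < s ^ 2 * (u + v) - u * v by nlinarith)]

private lemma key_mono (s u v : ℝ) (hs : 0 < s) (hu : 2 * s ^ 2 ≤ u) (huv : u < v) :
    u ^ 2 * (v - s ^ 2) < v ^ 2 * (u - s ^ 2) := by
  have hs2 : 0 < s ^ 2 := by positivity
  have hv0 : 0 < v := by nlinarith
  have h1 : v * s ^ 2 ≤ v * (u - s ^ 2) := by nlinarith
  have h2 : u * s ^ 2 < v * s ^ 2 := by nlinarith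
  nlinarith [mul_pos (sub_pos.2 huv) (show 0 < u * v - s ^ 2 * (u + v) by nlinarith)]

set_option maxHeartbeats 1600000 in
/-- Monotonicity and boundary values of the function `x₁ˢ` from the paper. -/
theorem stmt0 (l : ℝ) (hl : 0 < l) (hl4 : l < π / 4) :
    let x1 : ℝ → ℝ := fun y =>
      (1 / 2) * arcsin (cos l * sin y ^ 2 / Real.sqrt (sin y ^ 2 - sin l ^ 2))
    StrictAntiOn x1 (Icc (arcsin (tan l)) (arcsin (Real.sqrt 2 * sin l))) ∧
    StrictMonoOn x1 (Icc (arcsin (Real.sqrt 2 * sin l)) (π / 2)) ∧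
    x1 (arcsin (tan l)) = π / 4 ∧
    x1 (π / 2) = π / 4 ∧
    x1 (arcsin (Real.sqrt 2 * sin l)) = l := by
  intro x1
  have hx1 : ∀ y, x1 y
      = (1 / 2) * arcsin (cos l * sin y ^ 2 / Real.sqrt (sin y ^ 2 - sin l ^ 2)) :=
    fun y => rfl
  have hpi : 0 < π := Real.pi_pos
  have hl2 : l < π / 2 := by linarith
  have hsl : 0 < sin l := Real.sin_pos_of_pos_of_lt_pi hl (by linarith)
  have hcl : 0 < cos l := Real.cos_pos_of_mem_Ioo ⟨by linarith, hl2⟩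
  have hcl1 : cos l < 1 := by
    have := Real.cos_lt_cos_of_nonneg_of_le_pi (le_refl 0) (by linarith) hl
    rwa [Real.cos_zero] at this
  have hpyth : sin l ^ 2 + cos l ^ 2 = 1 := Real.sin_sq_add_cos_sq l
  have hs2 : Real.sqrt 2 ^ 2 = 2 := Real.sq_sqrt (by norm_num)
  have hr2 : 0 < Real.sqrt 2 := Real.sqrt_pos.2 (by norm_num)
  have hcgt : Real.sqrt 2 / 2 < cos l := by
    have := Real.cos_lt_cos_of_nonneg_of_le_pi hl.le (by linarith) hl4
    rwa [Real.cos_pi_div_four] at this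
  have hslt : sin l < Real.sqrt 2 / 2 := by
    have := Real.sin_lt_sin_of_lt_of_le_pi_div_two (by linarith : -(π/2) ≤ l)
      (by linarith) hl4
    rwa [Real.sin_pi_div_four] at this
  have htl : tan l = sin l / cos l := Real.tan_eq_sin_div_cos l
  have htl1 : tan l < 1 := by
    rw [← Real.tan_pi_div_four]
    exact Real.tan_lt_tan_of_nonneg_of_lt_pi_div_two hl.le (by linarith) hl4
  have htl0 : 0 < tan l := by rw [htl]; positivity
  have hsl_lt_tl : sin l < tan l := by
    rw [htl, lt_div_iff₀ hcl]; nlinarith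
  have hm1 : Real.sqrt 2 * sin l < 1 := by
    nlinarith [mul_lt_mul_of_pos_left hslt hr2]
  have hm0 : 0 < Real.sqrt 2 * sin l := by positivity
  have htan_lt : tan l < Real.sqrt 2 * sin l := by
    rw [htl, div_lt_iff₀ hcl]
    nlinarith [mul_lt_mul_of_pos_left hcgt hr2]
  have hsinA : sin (arcsin (tan l)) = tan l := Real.sin_arcsin (by linarith) htl1.le
  have hsinB : sin (arcsin (Real.sqrt 2 * sin l)) = Real.sqrt 2 * sin l :=
    Real.sin_arcsin (by linarith) hm1.le
  have hA0 : 0 ≤ arcsin (tan l) := Real.arcsin_nonneg.2 htl0.le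
  have hB0 : 0 ≤ arcsin (Real.sqrt 2 * sin l) := Real.arcsin_nonneg.2 hm0.le
  have hB2 : arcsin (Real.sqrt 2 * sin l) < π / 2 := Real.arcsin_lt_pi_div_two.2 hm1
  have hA2 : arcsin (tan l) ≤ π / 2 := Real.arcsin_le_pi_div_two _
  have htc : tan l ^ 2 * cos l ^ 2 = sin l ^ 2 := by
    rw [htl]; field_simp
  -- core: the argument of arcsin is ≤ 1 given bounds on t = sin y ^ 2
  have hFle : ∀ t : ℝ, sin l ^ 2 < t → tan l ^ 2 ≤ t → t ≤ 1 →
      cos l * t / Real.sqrt (t - sin l ^ 2) ≤ 1 := by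
    intro t ht hlo hhi
    refine F_le_one (cos l) (sin l) t hcl ?_ hhi hpyth ht
    nlinarith [mul_le_mul_of_nonneg_right hlo (sq_nonneg (cos l))]
  have hFpos : ∀ t : ℝ, sin l ^ 2 < t →
      0 ≤ cos l * t / Real.sqrt (t - sin l ^ 2) := by
    intro t ht
    have : 0 < t := lt_of_le_of_lt (sq_nonneg (sin l)) ht
    positivity
  constructor
  · -- strictly decreasing on [arcsin tan l, arcsin (√2 sin l)]
    intro a ha b hb hab
    have haI : a ∈ Icc (-(π/2)) (π/2) := ⟨by linarith [ha.1], by linarith [ha.2]⟩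
    have hbI : b ∈ Icc (-(π/2)) (π/2) := ⟨by linarith [hb.1], by linarith [hb.2]⟩
    have hsa : tan l ≤ sin a := by
      have := Real.strictMonoOn_sin.monotoneOn (Real.arcsin_mem_Icc _) haI ha.1
      rwa [hsinA] at this
    have hsb : sin b ≤ Real.sqrt 2 * sin l := by
      have := Real.strictMonoOn_sin.monotoneOn hbI (Real.arcsin_mem_Icc _) hb.2
      rwa [hsinB] at this
    have hsab : sin a < sin b := Real.strictMonoOn_sin haI hbI hab
    set u := sin a ^ 2 with hu_def
    set v := sin b ^ 2 with hv_def
    have hsa0 : 0 < sin a := lt_of_lt_of_le htl0 hsa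
    have hsb0 : 0 < sin b := lt_trans hsa0 hsab
    have hu : sin l ^ 2 < u :=
      pow_lt_pow_left₀ (lt_of_lt_of_le hsl_lt_tl hsa) hsl.le two_ne_zero
    have huv : u < v := pow_lt_pow_left₀ hsab hsa0.le two_ne_zero
    have hv : sin l ^ 2 < v := lt_trans hu huv
    have hvle : v ≤ 2 * sin l ^ 2 := by
      have h := pow_le_pow_left₀ hsb0.le hsb 2
      rwa [mul_pow, hs2] at h
    have key : v ^ 2 * (u - sin l ^ 2) < u ^ 2 * (v - sin l ^ 2) :=
      key_anti (sin l) u v hsl hu huv hvle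
    have hF := F_lt_F (cos l) (sin l) u v hcl hu hv key
    rw [hx1 a, hx1 b]
    have hu1 : u ≤ 1 := by
      have h := pow_le_pow_left₀ hsa0.le (Real.sin_le_one a) 2
      rw [one_pow] at h; exact h
    have hv1 : v ≤ 1 := by
      have h := pow_le_pow_left₀ hsb0.le (Real.sin_le_one b) 2
      rw [one_pow] at h; exact h
    have hut : tan l ^ 2 ≤ u := pow_le_pow_left₀ htl0.le hsa 2
    have hvt : tan l ^ 2 ≤ v := le_of_lt (lt_of_le_of_lt hut huv)
    have harc : arcsin (cos l * v / Real.sqrt (v - sin l ^ 2))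
        < arcsin (cos l * u / Real.sqrt (u - sin l ^ 2)) :=
      Real.strictMonoOn_arcsin ⟨by linarith [hFpos v hv], hFle v hv hvt hv1⟩
        ⟨by linarith [hFpos u hu], hFle u hu hut hu1⟩ hF
    linarith
  refine ⟨?_, ?_, ?_, ?_⟩
  · -- strictly increasing on [arcsin (√2 sin l), π/2]
    intro a ha b hb hab
    have haI : a ∈ Icc (-(π/2)) (π/2) := ⟨by linarith [ha.1], ha.2⟩
    have hbI : b ∈ Icc (-(π/2)) (π/2) := ⟨by linarith [hb.1], hb.2⟩
    have hsa : Real.sqrt 2 * sin l ≤ sin a := by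
      have := Real.strictMonoOn_sin.monotoneOn (Real.arcsin_mem_Icc _) haI ha.1
      rwa [hsinB] at this
    have hsab : sin a < sin b := Real.strictMonoOn_sin haI hbI hab
    set u := sin a ^ 2 with hu_def
    set v := sin b ^ 2 with hv_def
    have hsa0 : 0 < sin a := lt_of_lt_of_le hm0 hsa
    have hsb0 : 0 < sin b := lt_trans hsa0 hsab
    have huge : 2 * sin l ^ 2 ≤ u := by
      have h := pow_le_pow_left₀ hm0.le hsa 2
      rwa [mul_pow, hs2] at h
    have hu : sin l ^ 2 < u := by nlinarith [sq_nonneg (sin l)]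
    have huv : u < v := pow_lt_pow_left₀ hsab hsa0.le two_ne_zero
    have hv : sin l ^ 2 < v := lt_trans hu huv
    have key : u ^ 2 * (v - sin l ^ 2) < v ^ 2 * (u - sin l ^ 2) :=
      key_mono (sin l) u v hsl huge huv
    have hF := F_lt_F (cos l) (sin l) v u hcl hv hu key
    rw [hx1 a, hx1 b]
    have hu1 : u ≤ 1 := by
      have h := pow_le_pow_left₀ hsa0.le (Real.sin_le_one a) 2
      rw [one_pow] at h; exact h
    have hv1 : v ≤ 1 := by
      have h := pow_le_pow_left₀ hsb0.le (Real.sin_le_one b) 2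
      rw [one_pow] at h; exact h
    have hcos2 : 1 ≤ 2 * cos l ^ 2 := by
      nlinarith [mul_lt_mul_of_pos_left hcgt (show (0:ℝ) < Real.sqrt 2 / 2 by positivity),
        mul_lt_mul_of_pos_left hcgt hcl, hs2]
    have htlt : tan l ^ 2 ≤ 2 * sin l ^ 2 := by
      nlinarith [mul_nonneg (sq_nonneg (tan l)) (show (0:ℝ) ≤ 2 * cos l ^ 2 - 1 by linarith), htc]
    have hut : tan l ^ 2 ≤ u := by linarith
    have hvt : tan l ^ 2 ≤ v := by linarith
    have harc : arcsin (cos l * u / Real.sqrt (u - sin l ^ 2))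
        < arcsin (cos l * v / Real.sqrt (v - sin l ^ 2)) :=
      Real.strictMonoOn_arcsin ⟨by linarith [hFpos u hu], hFle u hu hut hu1⟩
        ⟨by linarith [hFpos v hv], hFle v hv hvt hv1⟩ hF
    linarith
  · -- value at arcsin (tan l)
    rw [hx1, hsinA]
    have hsq : tan l ^ 2 - sin l ^ 2 = (sin l ^ 2 / cos l) ^ 2 := by
      rw [htl]; field_simp; nlinarith
    have : cos l * tan l ^ 2 / Real.sqrt (tan l ^ 2 - sin l ^ 2) = 1 := by
      rw [hsq, Real.sqrt_sq (by positivity), htl]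
      field_simp
    rw [this, Real.arcsin_one]; ring
  · -- value at π / 2
    rw [hx1, Real.sin_pi_div_two]
    have h1 : (1:ℝ) ^ 2 - sin l ^ 2 = cos l ^ 2 := by nlinarith
    have : cos l * 1 ^ 2 / Real.sqrt ((1:ℝ) ^ 2 - sin l ^ 2) = 1 := by
      rw [h1, Real.sqrt_sq hcl.le]; field_simp
    rw [this, Real.arcsin_one]; ring
  · -- value at arcsin (√2 sin l)
    rw [hx1, hsinB]
    have h1 : (Real.sqrt 2 * sin l) ^ 2 - sin l ^ 2 = sin l ^ 2 := by
      rw [mul_pow, hs2]; ring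
    have : cos l * (Real.sqrt 2 * sin l) ^ 2 / Real.sqrt ((Real.sqrt 2 * sin l) ^ 2 - sin l ^ 2)
        = sin (2 * l) := by
      rw [h1, Real.sqrt_sq hsl.le, Real.sin_two_mul, mul_pow, hs2]
      field_simp
    rw [this, Real.arcsin_sin (by linarith) (by linarith)]; ring
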